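/- The subgroup Inn(F∞) of inner automorphisms is a closed subgroup of Aut(F∞) with respect to the permutation topology. -/

import Mathlib

/-- The free group of countably infinite rank, with the discrete topology. -/
instance : TopologicalSpace (FreeGroup ℕ) := ⊥
instance : DiscreteTopology (FreeGroup ℕ) := ⟨rfl⟩

/-- The permutation topology on `Aut(F∞)`: induced from the product topology on
the space of functions `F∞ → F∞` (with `F∞` discrete). -/
instance : TopologicalSpace (MulAut (FreeGroup ℕ)) :=
  TopologicalSpace.induced (fun f => (f : FreeGroup ℕ → FreeGroup ℕ)) Pi.topologicalSpace

open FreeGroup List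

variable {α : Type*} [DecidableEq α]

lemma myReduce_cons {L : List (α × Bool)} {x : α × Bool} (hL : reduce L = L)
    (h : ∀ hd tl, L = hd :: tl → ¬(x.1 = hd.1 ∧ x.2 = !hd.2)) :
    reduce (x :: L) = x :: L := by
  rw [reduce.cons, hL]
  cases L with
  | nil => rfl
  | cons hd tl => simp [if_neg (h hd tl rfl)]

lemma myReduce_tail {L : List (α × Bool)} {x : α × Bool} (h : reduce (x :: L) = x :: L) :
    reduce L = L := by
  have hs : (reduce L).Sublist L := (reduce.red).sublist
  rcases h' : reduce L with _ | ⟨hd, tl⟩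
  · rw [reduce.cons, h'] at h
    simp at h
    simp [h]
  · rw [reduce.cons, h'] at h
    change (if x.1 = hd.1 ∧ x.2 = !hd.2 then tl else x :: hd :: tl) = x :: L at h
    split_ifs at h with hc
    · -- x :: L = tl, impossible by length
      exfalso
      rw [h'] at hs
      have h1 := hs.length_le
      have h2 := congrArg List.length h
      simp at h1 h2
      omega
    · exact List.cons_injective h

lemma centralizer_aux (n : ℕ) : ∀ (x : FreeGroup ℕ) (i : ℕ), (toWord x).length ≤ n →
    FreeGroup.of i * x = x * FreeGroup.of i → x ∈ Subgroup.zpowers (FreeGroup.of i) := by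
  induction n with
  | zero =>
    intro x i hl _
    have : toWord x = [] := List.length_eq_zero_iff.mp (Nat.le_zero.mp hl)
    rw [toWord_eq_nil_iff.mp this]
    exact Subgroup.one_mem _
  | succ n ih =>
    have key : ∀ (x : FreeGroup ℕ) (i : ℕ), (toWord x).length ≤ n + 1 →
        FreeGroup.of i * x = x * FreeGroup.of i →
        ∀ b tl, toWord x = (i, b) :: tl → x ∈ Subgroup.zpowers (FreeGroup.of i) := by
      intro x i hl hc b tl hw
      set a : FreeGroup ℕ := cond b (FreeGroup.of i) (FreeGroup.of i)⁻¹ with ha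
      have hmk : mk [(i, b)] = a := by
        cases b
        · show mk [(i, false)] = (FreeGroup.of i)⁻¹
          rw [show (FreeGroup.of i : FreeGroup ℕ) = mk [(i, true)] from rfl, inv_mk]
          rfl
        · rfl
      have hx : x = a * mk tl := by
        rw [← hmk, mul_mk]
        conv_lhs => rw [← mk_toWord (x := x), hw]
        rfl
      have htl : reduce tl = tl := myReduce_tail (x := (i,b)) (by
        conv_rhs => rw [← hw]
        rw [← hw]
        exact reduce_toWord x)
      have hy : toWord (mk tl) = tl := by rw [toWord_mk, htl]
      have hlen : (toWord (mk tl)).length ≤ n := by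
        rw [hy]
        have := congrArg List.length hw
        simp at this
        omega
      have hca : FreeGroup.of i * a = a * FreeGroup.of i := by
        cases b <;> simp only [ha, Bool.cond_false, Bool.cond_true] <;> group
      have hcy : FreeGroup.of i * mk tl = mk tl * FreeGroup.of i := by
        have h1 : mk tl = a⁻¹ * x := by rw [hx]; group
        rw [h1, mul_assoc]
        rw [show FreeGroup.of i * (a⁻¹ * x) = a⁻¹ * (a * FreeGroup.of i * a⁻¹) * x by group,
          ← hca]
        rw [show a⁻¹ * (FreeGroup.of i * a * a⁻¹) * x = a⁻¹ * (FreeGroup.of i * x) by group, hc]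
      have hmem := ih (mk tl) i hlen hcy
      rw [hx]
      refine Subgroup.mul_mem _ ?_ hmem
      cases b
      · exact Subgroup.inv_mem _ (Subgroup.mem_zpowers _)
      · exact Subgroup.mem_zpowers _
    intro x i hl hc
    rcases hw : toWord x with _ | ⟨⟨j, b⟩, tl⟩
    · rw [toWord_eq_nil_iff.mp hw]; exact Subgroup.one_mem _
    · by_cases hji : j = i
      · exact key x i hl hc b tl (by rw [hw, hji])
      · rcases hw2 : toWord x⁻¹ with _ | ⟨⟨k, c⟩, tl2⟩
        · rw [show x = (x⁻¹)⁻¹ by group, toWord_eq_nil_iff.mp hw2]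
          simpa using Subgroup.one_mem _
        · by_cases hki : k = i
          · have hinv : FreeGroup.of i * x⁻¹ = x⁻¹ * FreeGroup.of i := by
              rw [show FreeGroup.of i * x⁻¹ = x⁻¹ * (x * FreeGroup.of i * x⁻¹) by group, ← hc]
              group
            have hl2 : (toWord x⁻¹).length ≤ n + 1 := by
              rw [toWord_inv, invRev_length]; exact hl
            have := key x⁻¹ i hl2 hinv c tl2 (by rw [hw2, hki])
            simpa using Subgroup.inv_mem _ this
          · exfalso
            set L : List (ℕ × Bool) := (j, b) :: tl with hL
            have hredL : reduce L = L := by rw [← hw]; exact reduce_toWord x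
            -- invRev L = toWord x⁻¹ = (k,c) :: tl2
            have hinvL : invRev L = (k, c) :: tl2 := by
              rw [← hw, ← toWord_inv, hw2]
            -- step 1 : reduce (L ++ [(i, false)]) = L ++ [(i, false)]
            have hstep1 : reduce (L ++ [(i, false)]) = L ++ [(i, false)] := by
              have hinv1 : invRev (L ++ [(i, false)]) = (i, true) :: invRev L := by
                simp [FreeGroup.invRev]
              have hred2 : reduce ((i, true) :: invRev L) = (i, true) :: invRev L := by
                refine myReduce_cons ?_ ?_
                · rw [← hw, ← toWord_inv]
                  exact reduce_toWord x⁻¹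
                · intro hd tl' hEq
                  rw [hinvL] at hEq
                  cases hEq
                  simp
                  intro h1
                  exact absurd h1.symm hki
              apply invRev_injective
              rw [← reduce_invRev, hinv1, hred2]
            -- step 2 : reduce ((i,true) :: L ++ [(i,false)]) = ...
            have hstep2 : reduce ((i, true) :: (L ++ [(i, false)])) =
                (i, true) :: (L ++ [(i, false)]) := by
              refine myReduce_cons hstep1 ?_
              intro hd tl' hEq
              rw [hL] at hEq
              rw [List.cons_append] at hEq
              cases hEq
              simp
              intro h1
              exact absurd h1.symm hji
            have hfix : FreeGroup.of i * x * (FreeGroup.of i)⁻¹ = x := by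
              rw [hc]; group
            have hmkeq : FreeGroup.of i * x * (FreeGroup.of i)⁻¹ =
                mk ((i, true) :: (L ++ [(i, false)])) := by
              conv_lhs => rw [← mk_toWord (x := x), hw]
              rw [show (FreeGroup.of i : FreeGroup ℕ) = mk [(i, true)] from rfl]
              rw [inv_mk, mul_mk, mul_mk]
              rfl
            have : toWord x = (i, true) :: (L ++ [(i, false)]) := by
              rw [← hfix, hmkeq, toWord_mk, hstep2]
            rw [hw] at this
            have := congrArg List.length this
            simp at this
            omega

lemma eq_one_of_comm_two (x : FreeGroup ℕ)
    (h0 : FreeGroup.of 0 * x = x * FreeGroup.of 0)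
    (h1 : FreeGroup.of 1 * x = x * FreeGroup.of 1) : x = 1 := by
  obtain ⟨m, hm⟩ := Subgroup.mem_zpowers_iff.mp
    (centralizer_aux (toWord x).length x 0 le_rfl h0)
  obtain ⟨k, hk⟩ := Subgroup.mem_zpowers_iff.mp
    (centralizer_aux (toWord x).length x 1 le_rfl h1)
  set φ : FreeGroup ℕ →* Multiplicative ℤ :=
    FreeGroup.lift (fun n => if n = 0 then Multiplicative.ofAdd (1 : ℤ) else 1) with hφ
  have hx1 : φ x = 1 := by
    rw [← hk, map_zpow, hφ, FreeGroup.lift_apply_of, if_neg one_ne_zero, one_zpow]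
  have hx0 : φ x = Multiplicative.ofAdd m := by
    rw [← hm, map_zpow, hφ, FreeGroup.lift_apply_of, if_pos rfl, ← ofAdd_zsmul, smul_eq_mul, mul_one]
  have hm0 : m = 0 := by
    have := hx0.symm.trans hx1
    simpa using this
  rw [← hm, hm0, zpow_zero]

/-- `Inn(F∞)` is closed in `Aut(F∞)` with the permutation topology. -/
theorem innFreeGroupInfinite_isClosed :
    IsClosed (((MulAut.conj : FreeGroup ℕ →* MulAut (FreeGroup ℕ)).range :
      Subgroup (MulAut (FreeGroup ℕ))) : Set (MulAut (FreeGroup ℕ))) := by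
  apply isClosed_of_closure_subset
  intro f hf
  have h : ∀ n : ℕ, ∃ g : FreeGroup ℕ,
      MulAut.conj g (FreeGroup.of 0) = f (FreeGroup.of 0) ∧
      MulAut.conj g (FreeGroup.of 1) = f (FreeGroup.of 1) ∧
      MulAut.conj g (FreeGroup.of n) = f (FreeGroup.of n) := by
    intro n
    set U : Set (MulAut (FreeGroup ℕ)) :=
      {ψ | ψ (FreeGroup.of 0) = f (FreeGroup.of 0) ∧ ψ (FreeGroup.of 1) = f (FreeGroup.of 1) ∧
        ψ (FreeGroup.of n) = f (FreeGroup.of n)} with hU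
    have hopen : IsOpen U := by
      refine isOpen_induced_iff.mpr ⟨{φ : FreeGroup ℕ → FreeGroup ℕ |
        φ (FreeGroup.of 0) = f (FreeGroup.of 0) ∧ φ (FreeGroup.of 1) = f (FreeGroup.of 1) ∧
        φ (FreeGroup.of n) = f (FreeGroup.of n)}, ?_, rfl⟩
      have h0 : IsOpen ((fun φ : FreeGroup ℕ → FreeGroup ℕ => φ (FreeGroup.of 0)) ⁻¹'
          {f (FreeGroup.of 0)}) :=
        (continuous_apply (FreeGroup.of 0)).isOpen_preimage _ (isOpen_discrete _)
      have h1 : IsOpen ((fun φ : FreeGroup ℕ → FreeGroup ℕ => φ (FreeGroup.of 1)) ⁻¹'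
          {f (FreeGroup.of 1)}) :=
        (continuous_apply (FreeGroup.of 1)).isOpen_preimage _ (isOpen_discrete _)
      have h2 : IsOpen ((fun φ : FreeGroup ℕ → FreeGroup ℕ => φ (FreeGroup.of n)) ⁻¹'
          {f (FreeGroup.of n)}) :=
        (continuous_apply (FreeGroup.of n)).isOpen_preimage _ (isOpen_discrete _)
      exact h0.inter (h1.inter h2)
    obtain ⟨ψ, hψU, hψS⟩ := mem_closure_iff.mp hf U hopen ⟨rfl, rfl, rfl⟩
    obtain ⟨g, hg⟩ := hψS
    exact ⟨g, by rw [hg]; exact hψU.1, by rw [hg]; exact hψU.2.1, by rw [hg]; exact hψU.2.2⟩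
  choose g hg using h
  have huniq : ∀ n, g n = g 2 := by
    intro n
    have e0 : g n * FreeGroup.of 0 * (g n)⁻¹ = g 2 * FreeGroup.of 0 * (g 2)⁻¹ := by
      have := (hg n).1.trans (hg 2).1.symm
      simpa [MulAut.conj_apply] using this
    have e1 : g n * FreeGroup.of 1 * (g n)⁻¹ = g 2 * FreeGroup.of 1 * (g 2)⁻¹ := by
      have := (hg n).2.1.trans (hg 2).2.1.symm
      simpa [MulAut.conj_apply] using this
    have c0 : FreeGroup.of 0 * ((g n)⁻¹ * g 2) = ((g n)⁻¹ * g 2) * FreeGroup.of 0 := by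
      rw [show FreeGroup.of 0 * ((g n)⁻¹ * g 2) =
        (g n)⁻¹ * (g n * FreeGroup.of 0 * (g n)⁻¹) * g 2 by group, e0]
      group
    have c1 : FreeGroup.of 1 * ((g n)⁻¹ * g 2) = ((g n)⁻¹ * g 2) * FreeGroup.of 1 := by
      rw [show FreeGroup.of 1 * ((g n)⁻¹ * g 2) =
        (g n)⁻¹ * (g n * FreeGroup.of 1 * (g n)⁻¹) * g 2 by group, e1]
      group
    have := eq_one_of_comm_two _ c0 c1
    have : g 2 = g n := by
      rw [← one_mul (g 2), ← mul_inv_cancel (g n), mul_assoc, this, mul_one]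
    exact this.symm
  have hall : ∀ a : ℕ, (MulAut.conj (g 2)) (FreeGroup.of a) = f (FreeGroup.of a) := by
    intro a
    rw [← huniq a]
    exact (hg a).2.2
  refine ⟨g 2, ?_⟩
  have := FreeGroup.ext_hom (M := FreeGroup ℕ)
    (MulAut.conj (g 2) : MulAut (FreeGroup ℕ)).toMonoidHom f.toMonoidHom hall
  exact MulEquiv.toMonoidHom_injective this
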